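/- arXiv:2602.17723 — 2 statements merged into one kernel-verified Lean document; each statement's English description precedes it below -/
import Mathlib

section
/- Let f, g : ℝ → ℝ be continuous, supported on [0, ∞), and of exponential order with constant c. Define the convolution (f * g)(t) = ∫₀^t f(t - s) g(s) ds. Then for 0 < v < 1/c, S[f * g](v) = v · S[f](v) · S[g](v). -/
open MeasureTheory Real Set

noncomputable def sumudu (f : ℝ → ℝ) (v : ℝ) : ℝ :=
  (1 / v) * ∫ t in Ioi (0:ℝ), Real.exp (-t / v) * f t

noncomputable def conv (f g : ℝ → ℝ) (t : ℝ) : ℝ :=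
  ∫ s in (0:ℝ)..t, f (t - s) * g s

lemma aux_integrable (h : ℝ → ℝ) (M c v : ℝ) (hv : 0 < v) (hcv : c < 1 / v)
    (hhc : Continuous h) (hsupp : ∀ t < (0:ℝ), h t = 0)
    (hbd : ∀ t ≥ (0:ℝ), |h t| ≤ M * Real.exp (c * t)) :
    Integrable (fun t => Real.exp (-t / v) * h t) := by
  set b : ℝ := 1 / v - c with hbdef
  have hb0 : 0 < b := sub_pos.2 hcv
  have hHc : Continuous fun t => Real.exp (-t / v) * h t :=
    (Real.continuous_exp.comp ((continuous_neg.comp continuous_id).div_const v)).mul hhc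
  have h1 : IntegrableOn (fun t => Real.exp (-t / v) * h t) (Iio 0) := by
    have : EqOn (fun t => Real.exp (-t / v) * h t) (fun _ => (0:ℝ)) (Iio 0) := by
      intro t ht; simp [hsupp t ht]
    exact (integrableOn_congr_fun this measurableSet_Iio).2 integrableOn_zero
  have hbig : IntegrableOn (fun t => M * Real.exp (-b * t)) (Ici 0) := by
    rw [integrableOn_Ici_iff_integrableOn_Ioi]
    exact (exp_neg_integrableOn_Ioi 0 hb0).const_mul M
  have h2 : IntegrableOn (fun t => Real.exp (-t / v) * h t) (Ici 0) := by
    refine Integrable.mono hbig hHc.aestronglyMeasurable.restrict ?_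
    refine (ae_restrict_iff' measurableSet_Ici).2 (ae_of_all _ fun t ht => ?_)
    have ht0 : (0:ℝ) ≤ t := ht
    have hexp : (0:ℝ) < Real.exp (-t / v) := Real.exp_pos _
    have : |Real.exp (-t / v) * h t| ≤ Real.exp (-t / v) * (M * Real.exp (c * t)) := by
      rw [abs_mul, abs_of_pos hexp]
      exact mul_le_mul_of_nonneg_left (hbd t ht0) hexp.le
    have heq : Real.exp (-t / v) * (M * Real.exp (c * t)) = M * Real.exp (-b * t) := by
      rw [← mul_assoc, mul_comm (Real.exp (-t / v)) M, mul_assoc, ← Real.exp_add]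
      congr 2
      rw [hbdef]
      ring
    calc ‖Real.exp (-t / v) * h t‖ = |Real.exp (-t / v) * h t| := rfl
      _ ≤ M * Real.exp (-b * t) := by rw [← heq]; exact this
      _ ≤ ‖M * Real.exp (-b * t)‖ := le_abs_self _
  rw [← integrableOn_univ, ← Iio_union_Ici (a := (0:ℝ))]
  exact h1.union h2

theorem sumudu_convolution (f g : ℝ → ℝ) (M c : ℝ) (hM : 0 < M) (hc : 0 < c)
    (hfc : Continuous f) (hgc : Continuous g)
    (hfsupp : ∀ t < (0:ℝ), f t = 0) (hgsupp : ∀ t < (0:ℝ), g t = 0)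
    (hfbound : ∀ t ≥ (0:ℝ), |f t| ≤ M * Real.exp (c * t))
    (hgbound : ∀ t ≥ (0:ℝ), |g t| ≤ M * Real.exp (c * t)) :
    ∀ v : ℝ, 0 < v → v < 1 / c →
      sumudu (conv f g) v = v * sumudu f v * sumudu g v := by
  intro v hv hvc
  have hvne : v ≠ 0 := ne_of_gt hv
  have hcv : c < 1 / v := by
    rw [lt_div_iff₀ hv, mul_comm, ← lt_div_iff₀ hc]
    simpa [div_div_eq_mul_div, one_div] using hvc
  set F : ℝ → ℝ := fun t => Real.exp (-t / v) * f t with hFdef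
  set G : ℝ → ℝ := fun t => Real.exp (-t / v) * g t with hGdef
  have hFi : Integrable F := aux_integrable f M c v hv hcv hfc hfsupp hfbound
  have hGi : Integrable G := aux_integrable g M c v hv hcv hgc hgsupp hgbound
  -- conv vanishes for t ≤ 0
  have hconv0 : ∀ t ≤ (0:ℝ), conv f g t = 0 := by
    intro t ht
    rcases eq_or_lt_of_le ht with h | h
    · rw [h] at *; simp [conv]
    · have : ∀ s : ℝ, f (t - s) * g s = 0 := by
        intro s
        rcases lt_or_ge s 0 with hs | hs
        · rw [hgsupp s hs, mul_zero]
        · rw [hfsupp (t - s) (by linarith), zero_mul]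
      simp only [conv]
      rw [intervalIntegral.integral_congr (g := fun _ => (0:ℝ)) (fun s _ => this s)]
      simp
  -- key pointwise identity
  have hkey : ∀ t : ℝ, (∫ s, G s * F (t - s)) = Real.exp (-t / v) * conv f g t := by
    intro t
    have h1 : ∀ s : ℝ, G s * F (t - s) = Real.exp (-t / v) * (f (t - s) * g s) := by
      intro s
      have hexp : Real.exp (-s / v) * Real.exp (-(t - s) / v) = Real.exp (-t / v) := by
        rw [← Real.exp_add]; congr 1; field_simp; ring
      simp only [hFdef, hGdef]
      calc Real.exp (-s / v) * g s * (Real.exp (-(t - s) / v) * f (t - s))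
          = (Real.exp (-s / v) * Real.exp (-(t - s) / v)) * (f (t - s) * g s) := by ring
        _ = Real.exp (-t / v) * (f (t - s) * g s) := by rw [hexp]
    simp only [h1]
    rw [integral_const_mul]
    congr 1
    -- ∫ s, f (t - s) * g s = conv f g t
    rcases le_or_gt 0 t with ht | ht
    · have hz : ∀ s : ℝ, s ∉ Icc 0 t → f (t - s) * g s = 0 := by
        intro s hs
        rw [mem_Icc, not_and_or] at hs
        rcases hs with hs | hs
        · rw [hgsupp s (lt_of_not_ge hs), mul_zero]
        · rw [hfsupp (t - s) (by push_neg at hs; linarith), zero_mul]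
      calc (∫ s, f (t - s) * g s)
          = ∫ s in Icc 0 t, f (t - s) * g s :=
            (setIntegral_eq_integral_of_forall_compl_eq_zero hz).symm
        _ = ∫ s in Ioc 0 t, f (t - s) * g s := integral_Icc_eq_integral_Ioc
        _ = ∫ s in (0:ℝ)..t, f (t - s) * g s := (intervalIntegral.integral_of_le ht).symm
        _ = conv f g t := rfl
    · have : ∀ s : ℝ, f (t - s) * g s = 0 := by
        intro s
        rcases lt_or_ge s 0 with hs | hs
        · rw [hgsupp s hs, mul_zero]
        · rw [hfsupp (t - s) (by linarith), zero_mul]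
      simp only [this]
      rw [integral_zero, hconv0 t ht.le]
  -- the product formula via convolution
  have hprod : (∫ t, (∫ s, G s * F (t - s))) = (∫ s, G s) * (∫ t, F t) := by
    have := integral_convolution (L := ContinuousLinearMap.mul ℝ ℝ)
      (μ := volume) (ν := volume) hGi hFi
    simpa [convolution_def] using this
  -- extend set integrals to full integrals
  have hFext : (∫ t in Ioi (0:ℝ), F t) = ∫ t, F t := by
    rw [← integral_Ici_eq_integral_Ioi]
    exact setIntegral_eq_integral_of_forall_compl_eq_zero fun t ht => by
      have : t < 0 := by simpa using ht
      simp [hFdef, hfsupp t this]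
  have hGext : (∫ t in Ioi (0:ℝ), G t) = ∫ t, G t := by
    rw [← integral_Ici_eq_integral_Ioi]
    exact setIntegral_eq_integral_of_forall_compl_eq_zero fun t ht => by
      have : t < 0 := by simpa using ht
      simp [hGdef, hgsupp t this]
  have hCext : (∫ t in Ioi (0:ℝ), Real.exp (-t / v) * conv f g t)
      = ∫ t, (∫ s, G s * F (t - s)) := by
    rw [← integral_Ici_eq_integral_Ioi]
    have h1 : (∫ t in Ici (0:ℝ), Real.exp (-t / v) * conv f g t)
        = ∫ t in Ici (0:ℝ), (∫ s, G s * F (t - s)) :=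
      setIntegral_congr_fun measurableSet_Ici fun t _ => (hkey t).symm
    rw [h1]
    exact setIntegral_eq_integral_of_forall_compl_eq_zero fun t ht => by
      have ht' : t < 0 := by simpa using ht
      rw [hkey t, hconv0 t ht'.le, mul_zero]
  -- assemble
  simp only [sumudu]
  rw [hCext, hprod, ← hFext, ← hGext]
  show 1 / v * ((∫ t in Ioi (0:ℝ), G t) * (∫ t in Ioi (0:ℝ), F t)) = v * (1 / v * ∫ t in Ioi (0:ℝ), F t) * (1 / v * ∫ t in Ioi (0:ℝ), G t)
  field_simp
end

section
/- Let γ ∈ (0,1), N(γ) > 0, and f as in the wsk-derivative setting (C¹ on [0,∞), exponential order c). For 0 < v < min(1/c, (1-γ)/γ), the Sumudu transform of Df(t) = (N(γ)/(1-γ)) ∫₀^t e^{-(γ/(1-γ))(t-τ)} f'(τ) dτ satisfies S[Df](v) = (N(γ)/(1-γ)) · (S[f](v) - f(0)) / (1 + (γ/(1-γ)) v). -/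
open MeasureTheory Real Set

section Helpers
open Filter
lemma integrable_exp_bound (h : ℝ → ℝ) (A b s : ℝ) (hA : 0 ≤ A) (hbs : b < s)
    (hcont : ContinuousOn h (Ici 0)) (hb : ∀ t ≥ (0:ℝ), |h t| ≤ A * Real.exp (b * t)) :
    IntegrableOn (fun t => Real.exp (-s * t) * h t) (Ioi (0:ℝ)) := by
  have hmeas : AEStronglyMeasurable (fun t => Real.exp (-s * t) * h t)
      (volume.restrict (Ioi (0:ℝ))) := by
    apply ContinuousOn.aestronglyMeasurable _ measurableSet_Ioi
    exact ((Real.continuous_exp.comp (continuous_const.mul continuous_id)).continuousOn).mul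
      (hcont.mono (fun x hx => Set.mem_Ici.mpr (le_of_lt (Set.mem_Ioi.mp hx))))
  have hint : IntegrableOn (fun t => A * Real.exp (-(s - b) * t)) (Ioi (0:ℝ)) :=
    (exp_neg_integrableOn_Ioi 0 (by linarith)).const_mul A
  refine Integrable.mono' hint hmeas ?_
  filter_upwards [ae_restrict_mem measurableSet_Ioi] with t ht
  have ht0 : (0:ℝ) ≤ t := le_of_lt ht
  have := hb t ht0
  have hnn : (0:ℝ) < Real.exp (-s * t) := Real.exp_pos _
  calc ‖Real.exp (-s * t) * h t‖ = Real.exp (-s * t) * |h t| := by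
        rw [norm_mul, Real.norm_eq_abs, Real.norm_eq_abs, abs_of_pos hnn]
    _ ≤ Real.exp (-s * t) * (A * Real.exp (b * t)) := by
        exact mul_le_mul_of_nonneg_left this (le_of_lt hnn)
    _ = A * (Real.exp (-s * t) * Real.exp (b * t)) := by ring
    _ = A * Real.exp (-(s - b) * t) := by rw [← Real.exp_add]; ring_nf

lemma laplace_ibp (g g' : ℝ → ℝ) (s A B b : ℝ) (hA : 0 ≤ A) (hB : 0 ≤ B) (hbs : b < s)
    (hcont : ContinuousOn g (Ici 0))
    (hg'cont : ContinuousOn g' (Ici 0))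
    (hderiv : ∀ t ∈ Ioi (0:ℝ), HasDerivAt g (g' t) t)
    (hgb : ∀ t ≥ (0:ℝ), |g t| ≤ A * Real.exp (b * t))
    (hg'b : ∀ t ≥ (0:ℝ), |g' t| ≤ B * Real.exp (b * t)) :
    ∫ t in Ioi (0:ℝ), Real.exp (-s * t) * g' t
      = s * (∫ t in Ioi (0:ℝ), Real.exp (-s * t) * g t) - g 0 := by
  have I1 : IntegrableOn (fun t => Real.exp (-s * t) * g' t) (Ioi (0:ℝ)) :=
    integrable_exp_bound g' B b s hB hbs hg'cont hg'b
  have I2 : IntegrableOn (fun t => Real.exp (-s * t) * g t) (Ioi (0:ℝ)) :=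
    integrable_exp_bound g A b s hA hbs hcont hgb
  have econt : Continuous fun t : ℝ => Real.exp (-s * t) :=
    Real.continuous_exp.comp (continuous_const.mul continuous_id)
  -- interval identity
  have key : ∀ T : ℝ, 0 ≤ T →
      (∫ t in (0:ℝ)..T, Real.exp (-s * t) * g' t)
        - s * ∫ t in (0:ℝ)..T, Real.exp (-s * t) * g t
      = Real.exp (-s * T) * g T - g 0 := by
    intro T hT
    have hsub : Icc (0:ℝ) T ⊆ Ici 0 := fun x hx => hx.1
    have hcg : ContinuousOn (fun t => Real.exp (-s * t) * g t) (Icc 0 T) :=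
      econt.continuousOn.mul (hcont.mono hsub)
    have hcg' : ContinuousOn (fun t => Real.exp (-s * t) * g' t) (Icc 0 T) :=
      econt.continuousOn.mul (hg'cont.mono hsub)
    have hii1 : IntervalIntegrable (fun t => Real.exp (-s * t) * g' t) volume 0 T := by
      rw [intervalIntegrable_iff_integrableOn_Icc_of_le hT]
      exact hcg'.integrableOn_compact isCompact_Icc
    have hii2 : IntervalIntegrable (fun t => Real.exp (-s * t) * g t) volume 0 T := by
      rw [intervalIntegrable_iff_integrableOn_Icc_of_le hT]
      exact hcg.integrableOn_compact isCompact_Icc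
    have hphi : ∀ x ∈ Ioo (0:ℝ) T, HasDerivWithinAt (fun t => Real.exp (-s * t) * g t)
        (Real.exp (-s * x) * g' x - s * (Real.exp (-s * x) * g x)) (Ioi x) x := by
      intro x hx
      have hd : HasDerivAt (fun t => Real.exp (-s * t) * g t)
          (Real.exp (-s * x) * (-s * 1) * g x + Real.exp (-s * x) * g' x) x := by
        exact (((hasDerivAt_id x).const_mul (-s)).exp).mul (hderiv x hx.1)
      have : Real.exp (-s * x) * (-s * 1) * g x + Real.exp (-s * x) * g' x
          = Real.exp (-s * x) * g' x - s * (Real.exp (-s * x) * g x) := by ring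
      exact (this ▸ hd).hasDerivWithinAt
    have hphint : IntervalIntegrable
        (fun x => Real.exp (-s * x) * g' x - s * (Real.exp (-s * x) * g x)) volume 0 T :=
      hii1.sub (hii2.const_mul s)
    have := intervalIntegral.integral_eq_sub_of_hasDeriv_right_of_le hT hcg hphi hphint
    rw [intervalIntegral.integral_sub hii1 (hii2.const_mul s)] at this
    rw [intervalIntegral.integral_const_mul] at this
    simpa using this
  -- limits
  have L1 : Tendsto (fun T => ∫ t in (0:ℝ)..T, Real.exp (-s * t) * g' t) atTop
      (nhds (∫ t in Ioi (0:ℝ), Real.exp (-s * t) * g' t)) :=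
    intervalIntegral_tendsto_integral_Ioi 0 I1 tendsto_id
  have L2 : Tendsto (fun T => ∫ t in (0:ℝ)..T, Real.exp (-s * t) * g t) atTop
      (nhds (∫ t in Ioi (0:ℝ), Real.exp (-s * t) * g t)) :=
    intervalIntegral_tendsto_integral_Ioi 0 I2 tendsto_id
  have L3 : Tendsto (fun T => Real.exp (-s * T) * g T) atTop (nhds 0) := by
    refine squeeze_zero_norm' (a := fun T => A * Real.exp ((b - s) * T)) ?_ ?_
    · filter_upwards [eventually_ge_atTop (0:ℝ)] with T hT
      have := hgb T hT
      calc ‖Real.exp (-s * T) * g T‖ = Real.exp (-s * T) * |g T| := by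
            rw [norm_mul, Real.norm_eq_abs, Real.norm_eq_abs, abs_of_pos (Real.exp_pos _)]
        _ ≤ Real.exp (-s * T) * (A * Real.exp (b * T)) :=
            mul_le_mul_of_nonneg_left this (le_of_lt (Real.exp_pos _))
        _ = A * (Real.exp (-s * T) * Real.exp (b * T)) := by ring
        _ = A * Real.exp ((b - s) * T) := by rw [← Real.exp_add]; ring_nf
    · have : Tendsto (fun T : ℝ => (b - s) * T) atTop atBot :=
        tendsto_id.const_mul_atTop_of_neg (by linarith)
      have h2 := Real.tendsto_exp_atBot.comp this
      simpa using h2.const_mul A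
  -- combine
  have L4 : Tendsto (fun T => ∫ t in (0:ℝ)..T, Real.exp (-s * t) * g' t) atTop
      (nhds (0 - g 0 + s * ∫ t in Ioi (0:ℝ), Real.exp (-s * t) * g t)) := by
    have : Tendsto (fun T => (Real.exp (-s * T) * g T - g 0)
        + s * ∫ t in (0:ℝ)..T, Real.exp (-s * t) * g t) atTop
        (nhds (0 - g 0 + s * ∫ t in Ioi (0:ℝ), Real.exp (-s * t) * g t)) :=
      (L3.sub_const (g 0)).add (L2.const_mul s)
    apply this.congr'
    filter_upwards [eventually_ge_atTop (0:ℝ)] with T hT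
    have := key T hT
    linarith
  have := tendsto_nhds_unique L1 L4
  rw [this]
  ring

lemma integral_exp_mul' (m a b : ℝ) (hm : m ≠ 0) :
    ∫ x in a..b, Real.exp (m * x) = (Real.exp (m * b) - Real.exp (m * a)) / m := by
  have hd : ∀ x : ℝ, HasDerivAt (fun y => Real.exp (m * y) / m) (Real.exp (m * x)) x := by
    intro x
    have h1 : HasDerivAt (fun y => Real.exp (m * y)) (Real.exp (m * x) * (m * 1)) x :=
      ((hasDerivAt_id x).const_mul m).exp
    have h2 := h1.div_const m
    convert h2 using 1
    exacts [rfl, rfl, by rw [mul_one, mul_div_cancel_right₀ _ hm]]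
  have hint : IntervalIntegrable (fun x => Real.exp (m * x)) volume a b :=
    (Real.continuous_exp.comp (continuous_const.mul continuous_id)).intervalIntegrable a b
  have := intervalIntegral.integral_eq_sub_of_hasDerivAt (fun x _ => hd x) hint
  rw [this]
  ring
end Helpers

theorem sumudu_wsk_deriv (γ : ℝ) (hγ : γ ∈ Set.Ioo (0:ℝ) 1)
    (N : ℝ → ℝ) (hN : 0 < N γ)
    (f f' : ℝ → ℝ) (M c : ℝ) (hM : 0 < M) (hc : 0 < c)
    (hderiv : ∀ t ≥ (0:ℝ), HasDerivAt f (f' t) t)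
    (hcont : ContinuousOn f' (Ici 0))
    (hfbound : ∀ t ≥ (0:ℝ), |f t| ≤ M * Real.exp (c * t))
    (hf'bound : ∀ t ≥ (0:ℝ), |f' t| ≤ M * Real.exp (c * t)) :
    ∀ v : ℝ, 0 < v → v < min (1 / c) ((1 - γ) / γ) →
      sumudu (fun t => (N γ / (1 - γ)) *
          ∫ τ in (0:ℝ)..t, Real.exp (-(γ / (1 - γ)) * (t - τ)) * f' τ) v =
        (N γ / (1 - γ)) * (sumudu f v - f 0) / (1 + (γ / (1 - γ)) * v) := by
  intro v hv hvlt
  have h1γ : 0 < 1 - γ := by linarith [hγ.2]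
  set k : ℝ := γ / (1 - γ) with hkdef
  set C : ℝ := N γ / (1 - γ) with hCdef
  have hk : 0 < k := div_pos hγ.1 h1γ
  have hv0 : v ≠ 0 := ne_of_gt hv
  have hcs : c < 1 / v := by
    have h1 : v < 1 / c := lt_of_lt_of_le hvlt (min_le_left _ _)
    rw [lt_div_iff₀ hv]
    calc c * v < c * (1 / c) := by exact mul_lt_mul_of_pos_left h1 hc
      _ = 1 := by field_simp
  have hs : 0 < 1 / v := by positivity
  -- extended derivative and antiderivative
  set fe : ℝ → ℝ := fun τ => f' (max τ 0) with hfedef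
  have hfecont : Continuous fe :=
    hcont.comp_continuous (continuous_id.max continuous_const) (fun x => le_max_right x 0)
  have hfe : ∀ τ : ℝ, 0 ≤ τ → fe τ = f' τ := by
    intro τ hτ; simp only [hfedef, max_eq_left hτ]
  set G : ℝ → ℝ := fun t => ∫ τ in (0:ℝ)..t, Real.exp (k * τ) * fe τ with hGdef
  have hhcont : Continuous fun τ => Real.exp (k * τ) * fe τ :=
    (Real.continuous_exp.comp (continuous_const.mul continuous_id)).mul hfecont
  have hGderiv : ∀ t : ℝ, HasDerivAt G (Real.exp (k * t) * fe t) t := by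
    intro t
    exact (hhcont.integral_hasStrictDerivAt 0 t).hasDerivAt
  have hGcont : Continuous G :=
    continuous_iff_continuousAt.mpr fun t => (hGderiv t).continuousAt
  have hG0 : G 0 = 0 := intervalIntegral.integral_same
  have hck : (0:ℝ) < c + k := by linarith
  -- bounds
  have hG'b : ∀ t ≥ (0:ℝ), |Real.exp (k * t) * fe t| ≤ M * Real.exp ((c + k) * t) := by
    intro t ht
    rw [hfe t ht, abs_mul, abs_of_pos (Real.exp_pos _)]
    calc Real.exp (k * t) * |f' t| ≤ Real.exp (k * t) * (M * Real.exp (c * t)) :=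
          mul_le_mul_of_nonneg_left (hf'bound t ht) (le_of_lt (Real.exp_pos _))
      _ = M * (Real.exp (k * t) * Real.exp (c * t)) := by ring
      _ = M * Real.exp ((c + k) * t) := by rw [← Real.exp_add]; ring_nf
  have hGb : ∀ t ≥ (0:ℝ), |G t| ≤ (M / (c + k)) * Real.exp ((c + k) * t) := by
    intro t ht
    have hii1 : IntervalIntegrable (fun τ => |Real.exp (k * τ) * fe τ|) volume 0 t :=
      hhcont.abs.intervalIntegrable 0 t
    have hii2 : IntervalIntegrable (fun τ => M * Real.exp ((c + k) * τ)) volume 0 t :=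
      (continuous_const.mul (Real.continuous_exp.comp
        (continuous_const.mul continuous_id))).intervalIntegrable 0 t
    have h1 : |G t| ≤ ∫ τ in (0:ℝ)..t, |Real.exp (k * τ) * fe τ| :=
      intervalIntegral.abs_integral_le_integral_abs ht
    have h2 : (∫ τ in (0:ℝ)..t, |Real.exp (k * τ) * fe τ|)
        ≤ ∫ τ in (0:ℝ)..t, M * Real.exp ((c + k) * τ) := by
      apply intervalIntegral.integral_mono_on ht hii1 hii2
      intro τ hτ
      exact hG'b τ hτ.1
    have h3 : (∫ τ in (0:ℝ)..t, M * Real.exp ((c + k) * τ))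
        = M * ((Real.exp ((c + k) * t) - 1) / (c + k)) := by
      rw [intervalIntegral.integral_const_mul, integral_exp_mul' (c + k) 0 t (ne_of_gt hck)]
      simp
    have h4 : M * ((Real.exp ((c + k) * t) - 1) / (c + k))
        ≤ (M / (c + k)) * Real.exp ((c + k) * t) := by
      rw [div_mul_eq_mul_div, mul_div_assoc]
      have hle : Real.exp ((c + k) * t) - 1 ≤ Real.exp ((c + k) * t) := by linarith
      gcongr
    linarith
  -- continuity of f on Ici 0
  have hfcont : ContinuousOn f (Ici 0) :=
    fun t ht => ((hderiv t ht).continuousAt).continuousWithinAt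
  -- apply integration by parts to G with parameter 1/v + k
  have EQ1 : ∫ t in Ioi (0:ℝ), Real.exp (-(1 / v + k) * t) * (Real.exp (k * t) * fe t)
      = (1 / v + k) * (∫ t in Ioi (0:ℝ), Real.exp (-(1 / v + k) * t) * G t) - G 0 := by
    apply laplace_ibp G (fun t => Real.exp (k * t) * fe t) (1 / v + k) (M / (c + k)) M (c + k)
      (by positivity) (le_of_lt hM) (by linarith) hGcont.continuousOn hhcont.continuousOn
      (fun t _ => hGderiv t) hGb hG'b
  -- apply integration by parts to f with parameter 1/v
  have EQ2 : ∫ t in Ioi (0:ℝ), Real.exp (-(1 / v) * t) * f' t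
      = (1 / v) * (∫ t in Ioi (0:ℝ), Real.exp (-(1 / v) * t) * f t) - f 0 := by
    apply laplace_ibp f f' (1 / v) M M c (le_of_lt hM) (le_of_lt hM) hcs hfcont hcont
      (fun t ht => hderiv t (le_of_lt ht)) hfbound hf'bound
  -- link the two
  have hlink : ∫ t in Ioi (0:ℝ), Real.exp (-(1 / v + k) * t) * (Real.exp (k * t) * fe t)
      = ∫ t in Ioi (0:ℝ), Real.exp (-(1 / v) * t) * f' t := by
    apply setIntegral_congr_fun measurableSet_Ioi
    intro t ht
    have ht0 : (0:ℝ) ≤ t := le_of_lt ht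
    show Real.exp (-(1 / v + k) * t) * (Real.exp (k * t) * fe t)
        = Real.exp (-(1 / v) * t) * f' t
    rw [hfe t ht0, ← mul_assoc, ← Real.exp_add]
    have : -(1 / v + k) * t + k * t = -(1 / v) * t := by ring
    rw [this]
  -- inner convolution integral
  have hinner : ∀ t : ℝ, 0 < t →
      (∫ τ in (0:ℝ)..t, Real.exp (-k * (t - τ)) * f' τ) = Real.exp (-k * t) * G t := by
    intro t ht
    have heq : ∀ τ ∈ uIcc (0:ℝ) t,
        Real.exp (-k * (t - τ)) * f' τ = Real.exp (-k * t) * (Real.exp (k * τ) * fe τ) := by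
      intro τ hτ
      rw [uIcc_of_le (le_of_lt ht)] at hτ
      rw [hfe τ hτ.1, ← mul_assoc, ← Real.exp_add]
      have : -k * (t - τ) = -k * t + k * τ := by ring
      rw [this]
    rw [intervalIntegral.integral_congr heq, intervalIntegral.integral_const_mul]
  -- main computation
  have hJ : ∫ t in Ioi (0:ℝ), Real.exp (-t / v) *
      (C * ∫ τ in (0:ℝ)..t, Real.exp (-k * (t - τ)) * f' τ)
      = C * ∫ t in Ioi (0:ℝ), Real.exp (-(1 / v + k) * t) * G t := by
    rw [← MeasureTheory.integral_const_mul]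
    apply setIntegral_congr_fun measurableSet_Ioi
    intro t ht
    show Real.exp (-t / v) * (C * ∫ τ in (0:ℝ)..t, Real.exp (-k * (t - τ)) * f' τ)
        = C * (Real.exp (-(1 / v + k) * t) * G t)
    rw [hinner t ht]
    rw [show Real.exp (-(1 / v + k) * t) = Real.exp (-t / v) * Real.exp (-k * t) by
      rw [← Real.exp_add]; congr 1; field_simp; ring]
    ring
  -- finish
  simp only [sumudu]
  rw [hJ]
  have hIv : (∫ t in Ioi (0:ℝ), Real.exp (-t / v) * f t)
      = ∫ t in Ioi (0:ℝ), Real.exp (-(1 / v) * t) * f t := by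
    congr 1
    funext t
    congr 1
    congr 1
    field_simp
  rw [hIv]
  rw [hG0] at EQ1
  rw [hlink, EQ2] at EQ1
  set J : ℝ := ∫ t in Ioi (0:ℝ), Real.exp (-(1 / v + k) * t) * G t with hJdef
  set I : ℝ := ∫ t in Ioi (0:ℝ), Real.exp (-(1 / v) * t) * f t with hIdef
  -- EQ1 : (1/v)*I - f 0 = (1/v + k)*J - 0
  have hkv : (1:ℝ) + k * v ≠ 0 := by positivity
  have hsk : (1:ℝ) / v + k ≠ 0 := by positivity
  field_simp
  field_simp at EQ1
  linear_combination (-C) * EQ1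
end
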